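/- Let p ≥ 1 and n ≥ p. Let Π ∈ ℝ^{(p+n)×(p+n)} be symmetric, partitioned as Π = [[Π₁₁, Π₁₂],[Π₁₂^⊤, Π₂₂]] with Π₁₁ ∈ ℝ^{p×p}, Π₁₂ ∈ ℝ^{p×n}, Π₂₂ ∈ ℝ^{n×n}. Assume Π₂₂ is negative definite and that there exists R_s ∈ ℝ^{p×n} such that [I_p; R_s^⊤]^⊤ Π [I_p; R_s^⊤] is positive semidefinite. Define J_p := [0_{p×(n−p)} I_p] ∈ ℝ^{p×n}, let T ∈ ℝ^{(p+n)×2n} be the block matrix [[J_p, 0_{p×n}],[0_{n×n}, I_n]], and set N := T^⊤ Π T ∈ ℝ^{2n×2n}, partitioned as N = [[N₁₁, N₁₂],[N₁₂^⊤, N₂₂]] with all blocks n×n. Then: N₂₂ is negative definite, ker N₂₂ ⊆ ker N₁₂, and N₁₁ − N₁₂ N₂₂^{−1} N₁₂^⊤ is positive semidefinite. -/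

import Mathlib

open Matrix

/-- The `(p+n) × p` matrix `[I_p; Rᵀ]` obtained by stacking `I_p` on top of `Rᵀ`. -/
def stackIRt {p n : ℕ} (R : Matrix (Fin p) (Fin n) ℝ) :
    Matrix (Fin p ⊕ Fin n) (Fin p) ℝ :=
  Matrix.of (Sum.elim (fun a j => if a = j then (1 : ℝ) else 0) (fun b j => R j b))

/-- `J_p = [0_{p×(n-p)} I_p] ∈ ℝ^{p×n}`. -/
def JpMat (p n : ℕ) : Matrix (Fin p) (Fin n) ℝ :=
  Matrix.of fun i j => if (j : ℕ) = n - p + (i : ℕ) then 1 else 0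

lemma stackIRt_quad {p n : ℕ} (P11 : Matrix (Fin p) (Fin p) ℝ) (P12 : Matrix (Fin p) (Fin n) ℝ)
    (P22 : Matrix (Fin n) (Fin n) ℝ) (Rs : Matrix (Fin p) (Fin n) ℝ) :
    (stackIRt Rs)ᵀ * Matrix.fromBlocks P11 P12 P12ᵀ P22 * stackIRt Rs
      = P11 + P12 * Rsᵀ + Rs * P12ᵀ + Rs * P22 * Rsᵀ := by
  ext i j
  simp only [stackIRt, Matrix.mul_apply, Matrix.fromBlocks, Matrix.add_apply,
    Matrix.transpose_apply, Matrix.of_apply, Fintype.sum_sum_type, Sum.elim_inl, Sum.elim_inr,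
    ite_mul, mul_ite, one_mul, zero_mul, mul_one, mul_zero,
    Finset.sum_ite_eq, Finset.sum_ite_eq', Finset.mem_univ, if_true]
  simp_rw [add_mul, Finset.sum_add_distrib]
  simp_rw [Finset.sum_mul]
  ring

/-- **Lemma 4.6 (matrix-level content).** If `Π = [[Π₁₁,Π₁₂],[Π₁₂ᵀ,Π₂₂]]` is symmetric
with `Π₂₂ ≺ 0` and `[I_p; R_sᵀ]ᵀ Π [I_p; R_sᵀ] ⪰ 0` for some `R_s`, then
`N := Tᵀ Π T` (with `T = [[J_p, 0],[0, I_n]]`) satisfies `N₂₂ ≺ 0`,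
`ker N₂₂ ⊆ ker N₁₂`, and `N₁₁ - N₁₂ N₂₂⁻¹ N₁₂ᵀ ⪰ 0`. -/
theorem stmt_8 (p n : ℕ) (hp : 1 ≤ p) (hpn : p ≤ n)
    (P11 : Matrix (Fin p) (Fin p) ℝ) (P12 : Matrix (Fin p) (Fin n) ℝ)
    (P22 : Matrix (Fin n) (Fin n) ℝ)
    (hP11 : P11.IsSymm) (hP22 : P22.IsSymm)
    (hP22neg : (-P22).PosDef)
    (Rs : Matrix (Fin p) (Fin n) ℝ)
    (hRs : ((stackIRt Rs)ᵀ * Matrix.fromBlocks P11 P12 P12ᵀ P22 *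
        stackIRt Rs).PosSemidef)
    (T : Matrix (Fin p ⊕ Fin n) (Fin n ⊕ Fin n) ℝ)
    (hT : T = Matrix.fromBlocks (JpMat p n) 0 0 (1 : Matrix (Fin n) (Fin n) ℝ))
    (N : Matrix (Fin n ⊕ Fin n) (Fin n ⊕ Fin n) ℝ)
    (hN : N = Tᵀ * Matrix.fromBlocks P11 P12 P12ᵀ P22 * T) :
    (-N.toBlocks₂₂).PosDef ∧
      (∀ x : Fin n → ℝ, N.toBlocks₂₂.mulVec x = 0 → N.toBlocks₁₂.mulVec x = 0) ∧
      (N.toBlocks₁₁ - N.toBlocks₁₂ * N.toBlocks₂₂⁻¹ * N.toBlocks₁₂ᵀ).PosSemidef := by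
  set Jp := JpMat p n with hJp
  -- block structure of N
  have hNb : N = Matrix.fromBlocks (Jpᵀ * P11 * Jp) (Jpᵀ * P12) (P12ᵀ * Jp) P22 := by
    rw [hN, hT]
    simp [Matrix.fromBlocks_transpose, Matrix.fromBlocks_multiply, Matrix.mul_assoc]
  have h11 : N.toBlocks₁₁ = Jpᵀ * P11 * Jp := by rw [hNb, Matrix.toBlocks_fromBlocks₁₁]
  have h12 : N.toBlocks₁₂ = Jpᵀ * P12 := by rw [hNb, Matrix.toBlocks_fromBlocks₁₂]
  have h22 : N.toBlocks₂₂ = P22 := by rw [hNb, Matrix.toBlocks_fromBlocks₂₂]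
  -- invertibility of P22
  have hdet : IsUnit P22.det := by
    have h1 : (0 : ℝ) < (-P22).det := hP22neg.det_pos
    rw [Matrix.det_neg] at h1
    refine isUnit_iff_ne_zero.mpr fun h0 => ?_
    rw [h0, mul_zero] at h1
    exact lt_irrefl _ h1
  have hinv1 : P22⁻¹ * P22 = 1 := Matrix.nonsing_inv_mul _ hdet
  have hinv2 : P22 * P22⁻¹ = 1 := Matrix.mul_nonsing_inv _ hdet
  have hinvT : P22⁻¹ᵀ = P22⁻¹ := by
    rw [Matrix.transpose_nonsing_inv, hP22.eq]
  -- Schur complement identity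
  set D := Rs + P12 * P22⁻¹ with hD
  have hDT : Dᵀ = Rsᵀ + P22⁻¹ * P12ᵀ := by
    rw [hD, Matrix.transpose_add, Matrix.transpose_mul, hinvT]
  have key : P11 - P12 * P22⁻¹ * P12ᵀ
      = (P11 + P12 * Rsᵀ + Rs * P12ᵀ + Rs * P22 * Rsᵀ) + D * (-P22) * Dᵀ := by
    rw [hDT, hD]
    simp only [Matrix.mul_add, Matrix.add_mul, Matrix.mul_neg, Matrix.neg_mul]
    have e1 : P12 * P22⁻¹ * P22 = P12 := by
      rw [Matrix.mul_assoc, hinv1, Matrix.mul_one]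
    have e2 : Rs * P22 * (P22⁻¹ * P12ᵀ) = Rs * P12ᵀ := by
      rw [Matrix.mul_assoc, ← Matrix.mul_assoc P22, hinv2, Matrix.one_mul]
    rw [e1, e2, ← Matrix.mul_assoc P12 P22⁻¹ P12ᵀ]
    abel
  -- Schur complement PSD
  have hM : (P11 - P12 * P22⁻¹ * P12ᵀ).PosSemidef := by
    rw [key]
    have h1 : ((stackIRt Rs)ᵀ * Matrix.fromBlocks P11 P12 P12ᵀ P22 * stackIRt Rs)
        = P11 + P12 * Rsᵀ + Rs * P12ᵀ + Rs * P22 * Rsᵀ := stackIRt_quad _ _ _ _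
    rw [h1] at hRs
    have h2 : (D * (-P22) * Dᴴ).PosSemidef :=
      hP22neg.posSemidef.mul_mul_conjTranspose_same D
    rw [show Dᴴ = Dᵀ from rfl] at h2
    exact hRs.add h2
  refine ⟨by rw [h22]; exact hP22neg, ?_, ?_⟩
  · intro x hx
    rw [h22] at hx
    have hx0 : x = 0 := by
      by_contra hne
      have := hP22neg.dotProduct_mulVec_pos (x := x) hne
      rw [Matrix.neg_mulVec, hx, neg_zero, dotProduct_zero] at this
      rw [lt_iff_le_and_ne] at this
      exact this.2 rfl
    rw [hx0, Matrix.mulVec_zero]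
  · rw [h11, h12, h22]
    have heq : Jpᵀ * P11 * Jp - Jpᵀ * P12 * P22⁻¹ * (Jpᵀ * P12)ᵀ
        = Jpᵀ * (P11 - P12 * P22⁻¹ * P12ᵀ) * Jp := by
      rw [Matrix.transpose_mul, Matrix.transpose_transpose]
      simp only [Matrix.mul_sub, Matrix.sub_mul]
      simp [Matrix.mul_assoc]
    rw [heq]
    have := hM.conjTranspose_mul_mul_same Jp
    rwa [show Jpᴴ = Jpᵀ from rfl] at this
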